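/- Let A ∈ ℝ^{m×n} have all rows nonzero, b ∈ ℝ^m, and x⋆ ∈ ℝⁿ with A x⋆ = b. Let λ > 0 satisfy ‖Au‖₂² ≥ λ‖u‖₂² for every u in the column space R(Aᵀ) of Aᵀ. Let x_k ∈ ℝⁿ with x_k − x⋆ ∈ R(Aᵀ) and x_k ≠ x⋆, and let r_k = b − Ax_k. Suppose J ⊆ {1,…,m} is a nonempty proper subset with r_k^{(i)} = 0 for every i ∈ J. Define the index set I_k = { i : |r_k^{(i)}|² ≥ (1/2)( max_{1≤l≤m} |r_k^{(l)}|² + Σ_{l=1}^m (‖A^{(l)}‖₂²/‖A‖_F²)|r_k^{(l)}|² ) }, let A_{I_k} and b_{I_k} be the row submatrix of A and subvector of b indexed by I_k, and let μ > 0 satisfy ‖A_{I_k}y‖₂² ≤ μ‖y‖₂² for all y ∈ ℝⁿ. Let x_{k+1} ∈ ℝⁿ satisfy A_{I_k}x_{k+1} = b_{I_k} and x_{k+1} − x_k ∈ R(A_{I_k}ᵀ). Then ‖x_{k+1} − x⋆‖₂² ≤ ( 1 − (1/2) · |I_k| · (min_{i∉J}‖A^{(i)}‖₂²/μ) · (λ/‖A‖_F²)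 · ( ‖A‖_F²/(‖A‖_F² − Σ_{i∈J}‖A^{(i)}‖₂²) + 1 ) ) ‖x_k − x⋆‖₂². -/

import Mathlib

open Matrix

/-- squared Euclidean norm of the `i`-th row of `A` -/
noncomputable def rowSq {m n : ℕ} (A : Matrix (Fin m) (Fin n) ℝ) (i : Fin m) : ℝ :=
  ∑ j, (A i j) ^ 2

/-- squared Frobenius norm of `A` -/
noncomputable def frobSq {m n : ℕ} (A : Matrix (Fin m) (Fin n) ℝ) : ℝ :=
  ∑ i, rowSq A i

/-- `i`-th entry of the residual `b - Ax` -/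
noncomputable def res {m n : ℕ} (A : Matrix (Fin m) (Fin n) ℝ) (b : Fin m → ℝ)
    (x : Fin n → ℝ) (i : Fin m) : ℝ :=
  b i - A.mulVec x i

/-- the bound (2a) of Theorem 2 for the GMBK method (for iterates `k ≥ 1`,
where the residual vanishes on the previously used index set `J`). The block Kaczmarz
update `x_{k+1} = x_k + A_{I_k}†(b_{I_k} − A_{I_k}x_k)` is characterized by
`A_{I_k}x_{k+1} = b_{I_k}` and `x_{k+1} − x_k ∈ R(A_{I_k}ᵀ)`. -/
theorem gmbk_later_step_bound (m n : ℕ)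
    (A : Matrix (Fin m) (Fin n) ℝ)
    (hA : ∀ i, (fun j => A i j) ≠ 0)
    (b : Fin m → ℝ) (xs : Fin n → ℝ) (hxs : A.mulVec xs = b)
    (lam : ℝ) (hlam : 0 < lam)
    (hspecA : ∀ u : Fin n → ℝ, (∃ y : Fin m → ℝ, u = Aᵀ.mulVec y) →
      ∑ i, (A.mulVec u i) ^ 2 ≥ lam * ∑ j, (u j) ^ 2)
    (xk : Fin n → ℝ) (hxkmem : ∃ y : Fin m → ℝ, xk - xs = Aᵀ.mulVec y)
    (hxkne : xk ≠ xs)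
    (J : Finset (Fin m)) (hJne : J.Nonempty) (hJproper : J ≠ Finset.univ)
    (hJres : ∀ i ∈ J, res A b xk i = 0)
    (MxR : ℝ) (hMxR : IsGreatest (Set.range fun i => (res A b xk i) ^ 2) MxR)
    (Ik : Finset (Fin m))
    (hIk : ∀ i, i ∈ Ik ↔ (res A b xk i) ^ 2 ≥
      (1 / 2) * (MxR + ∑ l, (rowSq A l / frobSq A) * (res A b xk l) ^ 2))
    (μ : ℝ) (hμ : 0 < μ)
    (hspecI : ∀ y : Fin n → ℝ, ∑ i ∈ Ik, (A.mulVec y i) ^ 2 ≤ μ * ∑ j, (y j) ^ 2)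
    (mJ : ℝ) (hmJ : IsLeast ((fun i => rowSq A i) '' {i | i ∉ J}) mJ)
    (xk1 : Fin n → ℝ)
    (hxk1sol : ∀ i ∈ Ik, A.mulVec xk1 i = b i)
    (hxk1mem : ∃ z : Fin m → ℝ, ∀ j, xk1 j - xk j = ∑ i ∈ Ik, z i * A i j) :
    ∑ j, (xk1 j - xs j) ^ 2
      ≤ (1 - (1 / 2) * (Ik.card : ℝ) * (mJ / μ) * (lam / frobSq A) *
            (frobSq A / (frobSq A - ∑ i ∈ J, rowSq A i) + 1)) *
          ∑ j, (xk j - xs j) ^ 2 := by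
  classical
  obtain ⟨i0, hi0J⟩ := hJne
  have hNE : Nonempty (Fin m) := ⟨i0⟩
  have hrow : ∀ i, 0 < rowSq A i := by
    intro i
    obtain ⟨j, hj⟩ := Function.ne_iff.mp (hA i)
    exact Finset.sum_pos' (fun k _ => sq_nonneg _) ⟨j, Finset.mem_univ j, lt_of_le_of_ne (sq_nonneg _) (Ne.symm (pow_ne_zero 2 hj))⟩
  have hFpos : 0 < frobSq A := Finset.sum_pos (fun i _ => hrow i) Finset.univ_nonempty
  have hcompl : (∑ i ∈ J, rowSq A i) + ∑ i ∈ Jᶜ, rowSq A i = frobSq A :=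
    Finset.sum_add_sum_compl J _
  have hJc : (Jᶜ : Finset (Fin m)).Nonempty := by
    obtain ⟨i, hi⟩ : ∃ i, i ∉ J := by
      by_contra h
      push_neg at h
      exact hJproper (Finset.eq_univ_iff_forall.mpr h)
    exact ⟨i, Finset.mem_compl.mpr hi⟩
  have hJcpos : 0 < ∑ i ∈ Jᶜ, rowSq A i := Finset.sum_pos (fun i _ => hrow i) hJc
  have hFS : 0 < frobSq A - ∑ i ∈ J, rowSq A i := by linarith
  have hmJpos : 0 < mJ := by
    obtain ⟨i, hi, hieq⟩ := hmJ.1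
    rw [← hieq]; exact hrow i
  have hmJle : ∀ i, i ∉ J → mJ ≤ rowSq A i := fun i hi => hmJ.2 ⟨i, hi, rfl⟩
  have hMxub : ∀ i, (res A b xk i) ^ 2 ≤ MxR := fun i => hMxR.2 ⟨i, rfl⟩
  have hres : ∀ i, res A b xk i = A.mulVec xs i - A.mulVec xk i := by
    intro i; simp [res, ← hxs]
  -- residual lower bound via lam
  have h9 : lam * ∑ j, (xk j - xs j) ^ 2 ≤ ∑ i, (res A b xk i) ^ 2 := by
    have h := hspecA (xk - xs) hxkmem
    have e1 : ∀ i, (res A b xk i) ^ 2 = (A.mulVec (xk - xs) i) ^ 2 := by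
      intro i
      have h2 : A.mulVec (xk - xs) i = A.mulVec xk i - A.mulVec xs i := by
        rw [Matrix.mulVec_sub]; rfl
      rw [h2, hres i]; ring
    calc lam * ∑ j, (xk j - xs j) ^ 2 = lam * ∑ j, ((xk - xs) j) ^ 2 := by
          simp [Pi.sub_apply]
      _ ≤ ∑ i, (A.mulVec (xk - xs) i) ^ 2 := h
      _ = ∑ i, (res A b xk i) ^ 2 := Finset.sum_congr rfl (fun i _ => (e1 i).symm)
  have hRnJc : ∑ i, (res A b xk i) ^ 2 = ∑ i ∈ Jᶜ, (res A b xk i) ^ 2 := by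
    rw [← Finset.sum_add_sum_compl J (fun i => (res A b xk i) ^ 2)]
    have hz : ∑ i ∈ J, (res A b xk i) ^ 2 = 0 :=
      Finset.sum_eq_zero (fun i hi => by rw [hJres i hi]; ring)
    rw [hz, zero_add]
  have hA1 : mJ * ∑ i, (res A b xk i) ^ 2
      ≤ MxR * (frobSq A - ∑ i ∈ J, rowSq A i) := by
    have e2 : frobSq A - ∑ i ∈ J, rowSq A i = ∑ i ∈ Jᶜ, rowSq A i := by linarith
    rw [hRnJc, e2, Finset.mul_sum, Finset.mul_sum]
    apply Finset.sum_le_sum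
    intro i hi
    have h1 : mJ * (res A b xk i) ^ 2 ≤ rowSq A i * (res A b xk i) ^ 2 :=
      mul_le_mul_of_nonneg_right (hmJle i (Finset.mem_compl.mp hi)) (sq_nonneg _)
    have h2 : rowSq A i * (res A b xk i) ^ 2 ≤ rowSq A i * MxR :=
      mul_le_mul_of_nonneg_left (hMxub i) (hrow i).le
    calc mJ * (res A b xk i) ^ 2 ≤ rowSq A i * MxR := le_trans h1 h2
      _ = MxR * rowSq A i := mul_comm _ _
  have hA2 : mJ * ∑ i, (res A b xk i) ^ 2 ≤ ∑ l, rowSq A l * (res A b xk l) ^ 2 := by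
    rw [hRnJc, Finset.mul_sum,
      ← Finset.sum_add_sum_compl J (fun l => rowSq A l * (res A b xk l) ^ 2)]
    have hz : ∑ l ∈ J, rowSq A l * (res A b xk l) ^ 2 = 0 :=
      Finset.sum_eq_zero (fun l hl => by rw [hJres l hl]; ring)
    rw [hz, zero_add]
    exact Finset.sum_le_sum (fun i hi =>
      mul_le_mul_of_nonneg_right (hmJle i (Finset.mem_compl.mp hi)) (sq_nonneg _))
  -- the threshold bound
  set C : ℝ := (1/2) * (mJ / frobSq A) *
      (frobSq A / (frobSq A - ∑ i ∈ J, rowSq A i) + 1) with hCdef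
  have hCpos : 0 < C := by
    apply mul_pos (mul_pos (by norm_num) (div_pos hmJpos hFpos))
    have := div_pos hFpos hFS
    linarith
  have hsum2 : ∑ l, (rowSq A l / frobSq A) * (res A b xk l) ^ 2
      = (∑ l, rowSq A l * (res A b xk l) ^ 2) / frobSq A := by
    rw [Finset.sum_div]
    exact Finset.sum_congr rfl (fun l _ => by ring)
  have hT : C * ∑ i, (res A b xk i) ^ 2
      ≤ (1/2) * (MxR + ∑ l, (rowSq A l / frobSq A) * (res A b xk l) ^ 2) := by
    have hb1 : mJ * (∑ i, (res A b xk i) ^ 2) / (frobSq A - ∑ i ∈ J, rowSq A i) ≤ MxR := by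
      rw [div_le_iff₀ hFS]; linarith
    have hb2 : mJ * (∑ i, (res A b xk i) ^ 2) / frobSq A
        ≤ ∑ l, (rowSq A l / frobSq A) * (res A b xk l) ^ 2 := by
      rw [hsum2]
      gcongr
    have heq : C * ∑ i, (res A b xk i) ^ 2
        = (1/2) * (mJ * (∑ i, (res A b xk i) ^ 2) / (frobSq A - ∑ i ∈ J, rowSq A i))
          + (1/2) * (mJ * (∑ i, (res A b xk i) ^ 2) / frobSq A) := by
      rw [hCdef]
      field_simp
    rw [heq]
    linarith
  -- per-element bound on the block
  have hcard : (Ik.card : ℝ) *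
      ((1/2) * (MxR + ∑ l, (rowSq A l / frobSq A) * (res A b xk l) ^ 2))
      ≤ ∑ i ∈ Ik, (res A b xk i) ^ 2 := by
    have h := Finset.card_nsmul_le_sum Ik (fun i => (res A b xk i) ^ 2) _
      (fun i hi => (hIk i).mp hi)
    simpa [nsmul_eq_mul] using h
  -- block residual vs step size
  have hd : ∑ i ∈ Ik, (res A b xk i) ^ 2 ≤ μ * ∑ j, (xk1 j - xk j) ^ 2 := by
    have h := hspecI (xk1 - xk)
    have e3 : ∀ i ∈ Ik, A.mulVec (xk1 - xk) i = res A b xk i := by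
      intro i hi
      have h2 : A.mulVec (xk1 - xk) i = A.mulVec xk1 i - A.mulVec xk i := by
        rw [Matrix.mulVec_sub]; rfl
      rw [h2, hxk1sol i hi]; rfl
    calc ∑ i ∈ Ik, (res A b xk i) ^ 2 = ∑ i ∈ Ik, (A.mulVec (xk1 - xk) i) ^ 2 :=
        Finset.sum_congr rfl (fun i hi => by rw [e3 i hi])
      _ ≤ μ * ∑ j, ((xk1 - xk) j) ^ 2 := h
      _ = μ * ∑ j, (xk1 j - xk j) ^ 2 := by simp [Pi.sub_apply]
  -- orthogonality and Pythagoras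
  obtain ⟨z, hz⟩ := hxk1mem
  have horth : ∑ j, (xk1 j - xk j) * (xk1 j - xs j) = 0 := by
    have hpt : ∀ j : Fin n, (xk1 j - xk j) * (xk1 j - xs j)
        = ∑ i ∈ Ik, z i * (A i j * (xk1 j - xs j)) := by
      intro j
      rw [hz j, Finset.sum_mul]
      exact Finset.sum_congr rfl (fun i _ => by ring)
    rw [Finset.sum_congr rfl (fun j _ => hpt j), Finset.sum_comm]
    apply Finset.sum_eq_zero
    intro i hi
    rw [← Finset.mul_sum]
    have h2 : ∑ j, A i j * (xk1 j - xs j) = A.mulVec xk1 i - A.mulVec xs i := by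
      simp [Matrix.mulVec, dotProduct, mul_sub, Finset.sum_sub_distrib]
    rw [h2, hxk1sol i hi, hxs]
    ring
  have hpyth : ∑ j, (xk j - xs j) ^ 2
      = ∑ j, (xk1 j - xs j) ^ 2 + ∑ j, (xk1 j - xk j) ^ 2
        - 2 * ∑ j, (xk1 j - xk j) * (xk1 j - xs j) := by
    rw [Finset.mul_sum, ← Finset.sum_add_distrib, ← Finset.sum_sub_distrib]
    exact Finset.sum_congr rfl (fun j _ => by ring)
  rw [horth, mul_zero, sub_zero] at hpyth
  -- combine everything
  have key1 : (Ik.card : ℝ) * (C * ∑ i, (res A b xk i) ^ 2)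
      ≤ ∑ i ∈ Ik, (res A b xk i) ^ 2 :=
    le_trans (mul_le_mul_of_nonneg_left hT (Nat.cast_nonneg _)) hcard
  have key2 : C * (lam * ∑ j, (xk j - xs j) ^ 2) ≤ C * ∑ i, (res A b xk i) ^ 2 :=
    mul_le_mul_of_nonneg_left h9 hCpos.le
  have key : (Ik.card : ℝ) * (C * (lam * ∑ j, (xk j - xs j) ^ 2))
      ≤ μ * ∑ j, (xk1 j - xk j) ^ 2 :=
    le_trans (le_trans (mul_le_mul_of_nonneg_left key2 (Nat.cast_nonneg _)) key1) hd
  have hdiv : ((Ik.card : ℝ) * (C * (lam * ∑ j, (xk j - xs j) ^ 2))) / μ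
      ≤ ∑ j, (xk1 j - xk j) ^ 2 := by
    rw [div_le_iff₀ hμ]
    linarith
  have hfin : (1 - (1 / 2) * (Ik.card : ℝ) * (mJ / μ) * (lam / frobSq A) *
        (frobSq A / (frobSq A - ∑ i ∈ J, rowSq A i) + 1)) * ∑ j, (xk j - xs j) ^ 2
      = (∑ j, (xk j - xs j) ^ 2)
        - ((Ik.card : ℝ) * (C * (lam * ∑ j, (xk j - xs j) ^ 2))) / μ := by
    rw [hCdef]
    ring
  rw [hfin]
  linarith
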